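/- Let n ≥ 0, let R = ℚ[x_1,…,x_n], let e_1,…,e_n ∈ R be the elementary symmetric polynomials, let c_k = e_k(1,2,…,n), and let I = (e_1−c_1,…,e_n−c_n) ⊂ R. For any polynomial F ∈ R, the ℚ-rank of the multiplication map m_F : R/I → R/I equals the number of permutations σ of {1,…,n} such that F(σ(1),…,σ(n)) ≠ 0. -/

import Mathlib

set_option synthInstance.maxHeartbeats 1000000

open MvPolynomial

/-- `c k` is the value of the `k`-th elementary symmetric polynomial at `(1,2,…,n)`. -/
noncomputable def cval (n k : ℕ) : ℚ :=
  eval (fun i : Fin n => ((i : ℕ) : ℚ) + 1) (esymm (Fin n) ℚ k)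

/-- The ideal `I = (e_1 - c_1, …, e_n - c_n)` of polynomials vanishing on all
permutations of `(1,…,n)`. -/
noncomputable def permIdeal (n : ℕ) : Ideal (MvPolynomial (Fin n) ℚ) :=
  Ideal.span (Set.range (fun k : Fin n =>
    esymm (Fin n) ℚ ((k : ℕ) + 1) - C (cval n ((k : ℕ) + 1))))

/-- Multiplication by (the class of) `F` on the quotient `R/I`, as a `ℚ`-linear map. -/
noncomputable def mulMap (n : ℕ) (I : Ideal (MvPolynomial (Fin n) ℚ))
    (F : MvPolynomial (Fin n) ℚ) :
    (MvPolynomial (Fin n) ℚ ⧸ I) →ₗ[ℚ] (MvPolynomial (Fin n) ℚ ⧸ I) :=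
  LinearMap.mulLeft ℚ (Ideal.Quotient.mk I F)

set_option maxHeartbeats 1000000

open Finset

namespace PermProof

noncomputable def gridPoly (n : ℕ) (j : Fin n) : MvPolynomial (Fin n) ℚ :=
  ∏ k : Fin n, (X j - C (((k : ℕ) : ℚ) + 1))


lemma esymm_map_hom {R S : Type*} [CommSemiring R] [CommSemiring S] (f : R →+* S)
    (s : Multiset R) (k : ℕ) : (s.map f).esymm k = f (s.esymm k) := by
  simp only [Multiset.esymm, Multiset.powersetCard_map, Multiset.map_map, map_sum,
    Multiset.map_map]
  rw [← Multiset.sum_hom _ f, Multiset.map_map]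
  congr 1
  apply Multiset.map_congr rfl
  intro t _
  simp [Multiset.prod_hom t f]

lemma eval_esymm (n : ℕ) (v : Fin n → ℚ) (k : ℕ) :
    eval v (esymm (Fin n) ℚ k) = (Finset.univ.val.map v).esymm k := by
  have := MvPolynomial.aeval_esymm_eq_multiset_esymm (σ := Fin n) ℚ (S := ℚ) k v
  rw [← this]; rfl

/-- generator membership -/
lemma esymm_sub_cval_mem (n : ℕ) {m : ℕ} (h1 : 1 ≤ m) (h2 : m ≤ n) :
    esymm (Fin n) ℚ m - C (cval n m) ∈ permIdeal n := by
  have : ∃ k : Fin n, (k : ℕ) + 1 = m := by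
    refine ⟨⟨m - 1, by omega⟩, by simp; omega⟩
  obtain ⟨k, hk⟩ := this
  rw [← hk]
  exact Ideal.subset_span ⟨k, rfl⟩

lemma gridPoly_mem (n : ℕ) (j : Fin n) : gridPoly n j ∈ permIdeal n := by
  classical
  set R := MvPolynomial (Fin n) ℚ
  set s₁ : Multiset R := univ.val.map (fun i : Fin n => X i) with hs₁
  set s₂ : Multiset R := univ.val.map (fun i : Fin n => C (((i : ℕ) : ℚ) + 1)) with hs₂
  have hc₁ : Multiset.card s₁ = n := by simp [hs₁]
  have hc₂ : Multiset.card s₂ = n := by simp [hs₂]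
  set A : Polynomial R := (s₁.map (fun t => Polynomial.X - Polynomial.C t)).prod with hA
  set B : Polynomial R := (s₂.map (fun t => Polynomial.X - Polynomial.C t)).prod with hB
  have he₁ : ∀ m, s₁.esymm m = esymm (Fin n) ℚ m := by
    intro m; rw [MvPolynomial.esymm_eq_multiset_esymm]
  have he₂ : ∀ m, s₂.esymm m = C (cval n m) := by
    intro m
    have : s₂ = (univ.val.map (fun i : Fin n => ((i : ℕ) : ℚ) + 1)).map (C : ℚ →+* R) := by
      rw [Multiset.map_map]; rfl
    rw [this, esymm_map_hom, ← eval_esymm]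
    rfl
  have hAe : A = ∑ m ∈ range (n + 1),
      (-1) ^ m * (Polynomial.C (esymm (Fin n) ℚ m) * Polynomial.X ^ (n - m)) := by
    rw [hA, Multiset.prod_X_sub_X_eq_sum_esymm, hc₁]
    exact Finset.sum_congr rfl fun m _ => by rw [he₁]
  have hBe : B = ∑ m ∈ range (n + 1),
      (-1) ^ m * (Polynomial.C ((C (cval n m) : R)) * Polynomial.X ^ (n - m)) := by
    rw [hB, Multiset.prod_X_sub_X_eq_sum_esymm, hc₂]
    exact Finset.sum_congr rfl fun m _ => by rw [he₂]
  -- evaluate A - B at X j lands in the ideal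
  have hmemD : Polynomial.eval (X j : R) (A - B) ∈ permIdeal n := by
    rw [hAe, hBe, ← Finset.sum_sub_distrib]
    rw [Polynomial.eval_finset_sum]
    apply Ideal.sum_mem
    intro m hm
    have : Polynomial.eval (X j : R)
        ((-1) ^ m * (Polynomial.C (esymm (Fin n) ℚ m) * Polynomial.X ^ (n - m)) -
         (-1) ^ m * (Polynomial.C ((C (cval n m) : R)) * Polynomial.X ^ (n - m)))
        = (-1) ^ m * ((esymm (Fin n) ℚ m - C (cval n m)) * (X j : R) ^ (n - m)) := by
      simp only [Polynomial.eval_sub, Polynomial.eval_mul, Polynomial.eval_pow,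
        Polynomial.eval_C, Polynomial.eval_X, Polynomial.eval_one, Polynomial.eval_neg]
      ring
    rw [this]
    rcases Nat.eq_zero_or_pos m with h0 | h1
    · subst h0
      have : esymm (Fin n) ℚ 0 - C (cval n 0) = 0 := by
        simp [MvPolynomial.esymm_zero, cval, MvPolynomial.esymm_zero]
      rw [this]
      simp
    · have hmn : m ≤ n := by have := Finset.mem_range.mp hm; omega
      exact Ideal.mul_mem_left _ _ (Ideal.mul_mem_right _ _
        (esymm_sub_cval_mem n h1 hmn))
  have hevalA : Polynomial.eval (X j : R) A = 0 := by
    rw [hA, show Polynomial.eval (X j : R) = ⇑(Polynomial.evalRingHom (X j : R)) from rfl,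
      ← Multiset.prod_hom _ (Polynomial.evalRingHom (X j : R)), Multiset.map_map]
    rw [show ((Polynomial.evalRingHom (X j : R)) ∘ (fun t => Polynomial.X - Polynomial.C t)) =
      (fun t : R => (X j : R) - t) from funext fun t => by simp]
    rw [hs₁, Multiset.map_map]
    have h0 : ∏ i : Fin n, ((X j : R) - X i) = 0 :=
      Finset.prod_eq_zero (Finset.mem_univ j) (sub_self (X j : R))
    rw [← h0]
    rfl
  have hevalB : Polynomial.eval (X j : R) B = gridPoly n j := by
    rw [hB, show Polynomial.eval (X j : R) = ⇑(Polynomial.evalRingHom (X j : R)) from rfl,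
      ← Multiset.prod_hom _ (Polynomial.evalRingHom (X j : R)), Multiset.map_map]
    rw [show ((Polynomial.evalRingHom (X j : R)) ∘ (fun t => Polynomial.X - Polynomial.C t)) =
      (fun t : R => (X j : R) - t) from funext fun t => by simp]
    rw [hs₂, Multiset.map_map]
    rfl
  have : gridPoly n j = -(Polynomial.eval (X j : R) (A - B)) := by
    rw [Polynomial.eval_sub, hevalA, hevalB]; ring
  rw [this]
  exact neg_mem hmemD

noncomputable def gridIdeal (n : ℕ) : Ideal (MvPolynomial (Fin n) ℚ) :=
  Ideal.span (Set.range (gridPoly n))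

variable (n : ℕ)

local notation "A" => MvPolynomial (Fin n) ℚ ⧸ gridIdeal n

noncomputable def y (j : Fin n) : MvPolynomial (Fin n) ℚ ⧸ gridIdeal n :=
  Ideal.Quotient.mk (gridIdeal n) (X j)

noncomputable def charp : Polynomial ℚ :=
  ∏ k : Fin n, (Polynomial.X - Polynomial.C (((k : ℕ) : ℚ) + 1))

lemma charp_monic : (charp n).Monic :=
  Polynomial.monic_prod_of_monic _ _ fun k _ => Polynomial.monic_X_sub_C _

lemma charp_natDegree : (charp n).natDegree = n := by
  rw [charp, Polynomial.natDegree_prod_of_monic _ _ fun k _ => Polynomial.monic_X_sub_C _]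
  have h1 : ∀ k : Fin n, (Polynomial.X - Polynomial.C (((k : ℕ) : ℚ) + 1)).natDegree = 1 :=
    fun k => Polynomial.natDegree_X_sub_C _
  rw [Finset.sum_congr rfl fun k _ => h1 k]
  simp

lemma aeval_y_charp (j : Fin n) : Polynomial.aeval (y n j) (charp n) = 0 := by
  rw [charp, map_prod]
  have : ∀ k : Fin n, Polynomial.aeval (y n j) (Polynomial.X - Polynomial.C (((k : ℕ) : ℚ) + 1))
      = Ideal.Quotient.mk (gridIdeal n) (X j - C (((k : ℕ) : ℚ) + 1)) := by
    intro k
    rw [map_sub, Polynomial.aeval_X, Polynomial.aeval_C]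
    rfl
  rw [Finset.prod_congr rfl fun k _ => this k, ← map_prod]
  have : (∏ k : Fin n, (X j - C (((k : ℕ) : ℚ) + 1))) ∈ gridIdeal n :=
    Ideal.subset_span ⟨j, rfl⟩
  rwa [← Ideal.Quotient.eq_zero_iff_mem] at this

noncomputable def spanMon : Submodule ℚ (MvPolynomial (Fin n) ℚ ⧸ gridIdeal n) :=
  Submodule.span ℚ (Set.range fun v : Fin n → Fin n => ∏ i, y n i ^ ((v i : ℕ)))

lemma pow_mul_mem (j : Fin n) (t : ℕ) (g : A)
    (hg : ∀ s, s < n → y n j ^ s * g ∈ spanMon n) : y n j ^ t * g ∈ spanMon n := by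
  have hn : 0 < n := j.pos
  by_cases ht : t < n
  · exact hg t ht
  · have hne : charp n ≠ 1 := by
      intro h
      have := charp_natDegree n
      rw [h, Polynomial.natDegree_one] at this
      omega
    set r := Polynomial.X ^ t %ₘ charp n with hr
    have hdeg : r.natDegree < n := by
      have := Polynomial.natDegree_modByMonic_lt (Polynomial.X ^ t) (charp_monic n) hne
      rwa [charp_natDegree n] at this
    have hyt : y n j ^ t = Polynomial.aeval (y n j) r := by
      have h1 : Polynomial.aeval (y n j) ((Polynomial.X : Polynomial ℚ) ^ t) = y n j ^ t :=
        Polynomial.aeval_X_pow (y n j)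
      rw [← h1, show Polynomial.X ^ t = r + charp n * (Polynomial.X ^ t /ₘ charp n) from
        (Polynomial.modByMonic_add_div _ (charp n)).symm]
      rw [map_add, map_mul, aeval_y_charp, zero_mul, add_zero]
    rw [hyt, Polynomial.aeval_eq_sum_range' hdeg, Finset.sum_mul]
    apply Submodule.sum_mem
    intro s hs
    rw [Finset.mem_range] at hs
    rw [smul_mul_assoc]
    exact Submodule.smul_mem _ _ (hg s hs)

lemma mul_y_mem (j : Fin n) (g : A) (hg : g ∈ spanMon n) : y n j * g ∈ spanMon n := by
  refine Submodule.span_induction ?_ ?_ ?_ ?_ hg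
  · rintro x ⟨v, rfl⟩
    show y n j * ∏ i : Fin n, y n i ^ ((v i : ℕ)) ∈ spanMon n
    rw [← Finset.mul_prod_erase univ _ (Finset.mem_univ j), ← mul_assoc, ← pow_succ']
    apply pow_mul_mem
    intro s hs
    apply Submodule.subset_span
    refine ⟨Function.update v j ⟨s, hs⟩, ?_⟩
    show (∏ i : Fin n, y n i ^ ((Function.update v j ⟨s, hs⟩ i : ℕ))) = _
    rw [← Finset.mul_prod_erase univ _ (Finset.mem_univ j)]
    congr 1
    · simp
    · apply Finset.prod_congr rfl
      intro i hi
      rw [Function.update_of_ne (Finset.ne_of_mem_erase hi)]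
  · simp
  · intro a b _ _ ha hb
    rw [mul_add]; exact Submodule.add_mem _ ha hb
  · intro c a _ ha
    rw [mul_smul_comm]; exact Submodule.smul_mem _ _ ha
lemma spanMon_eq_top : spanMon n = ⊤ := by
  rw [eq_top_iff]
  rintro x -
  obtain ⟨f, rfl⟩ := Ideal.Quotient.mk_surjective x
  induction f using MvPolynomial.induction_on with
  | C a =>
      have h1 : (Ideal.Quotient.mk (gridIdeal n) (C a) : A) = algebraMap ℚ _ a := rfl
      rw [h1, Algebra.algebraMap_eq_smul_one]
      apply Submodule.smul_mem
      apply Submodule.subset_span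
      exact ⟨fun i => ⟨0, i.pos⟩, by simp⟩
  | add f g hf hg => rw [map_add]; exact Submodule.add_mem _ hf hg
  | mul_X f j hf =>
      rw [map_mul]
      have : (Ideal.Quotient.mk (gridIdeal n) f : A) * Ideal.Quotient.mk (gridIdeal n) (X j)
          = y n j * Ideal.Quotient.mk (gridIdeal n) f := mul_comm _ _
      rw [this]
      exact mul_y_mem n j _ hf

instance : Module.Finite ℚ (MvPolynomial (Fin n) ℚ ⧸ gridIdeal n) :=
  ⟨⟨Set.Finite.toFinset (Set.finite_range _), by
    rw [Set.Finite.coe_toFinset]; exact spanMon_eq_top n⟩⟩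

lemma finrank_quot_le : Module.finrank ℚ (MvPolynomial (Fin n) ℚ ⧸ gridIdeal n) ≤ n ^ n := by
  have := finrank_le_of_span_eq_top (spanMon_eq_top n)
  simpa [Fintype.card_fun] using this

def pt (p : Fin n → Fin n) : Fin n → ℚ := fun i => ((p i : ℕ) : ℚ) + 1

noncomputable def ψ : MvPolynomial (Fin n) ℚ →ₐ[ℚ] ((Fin n → Fin n) → ℚ) :=
  Pi.algHom _ _ (fun p => MvPolynomial.aeval (pt n p))

lemma ψ_apply (f : MvPolynomial (Fin n) ℚ) (p : Fin n → Fin n) :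
    ψ n f p = eval (pt n p) f := rfl

lemma pt_injOn (p q : Fin n → Fin n) (i : Fin n) (h : pt n p i = pt n q i) : p i = q i := by
  have : ((p i : ℕ) : ℚ) = ((q i : ℕ) : ℚ) := by
    have := h; simp only [pt] at this; linarith
  exact Fin.ext (Nat.cast_injective this)

lemma gridIdeal_le_ker : gridIdeal n ≤ RingHom.ker (ψ n) := by
  rw [gridIdeal, Ideal.span_le]
  rintro x ⟨j, rfl⟩
  rw [SetLike.mem_coe, RingHom.mem_ker]
  funext p
  show eval (pt n p) (gridPoly n j) = 0
  rw [gridPoly, map_prod]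
  apply Finset.prod_eq_zero (Finset.mem_univ (p j))
  simp [pt]

noncomputable def lagr (p : Fin n → Fin n) : MvPolynomial (Fin n) ℚ :=
  ∏ i, ∏ k ∈ univ.erase (p i), (X i - C (((k : ℕ) : ℚ) + 1))

lemma eval_lagr_self (p : Fin n → Fin n) : eval (pt n p) (lagr n p) ≠ 0 := by
  rw [lagr, map_prod]
  apply Finset.prod_ne_zero_iff.mpr
  intro i _
  rw [map_prod]
  apply Finset.prod_ne_zero_iff.mpr
  intro k hk
  have hne : k ≠ p i := Finset.ne_of_mem_erase hk
  simp only [map_sub, eval_X, eval_C, pt]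
  intro h
  apply hne
  apply Fin.ext
  have h2 : ((p i : ℕ) : ℚ) = ((k : ℕ) : ℚ) := by linarith [sub_eq_zero.mp h]
  exact (Nat.cast_injective h2).symm

lemma eval_lagr_ne (p q : Fin n → Fin n) (hpq : q ≠ p) : eval (pt n q) (lagr n p) = 0 := by
  obtain ⟨i, hi⟩ : ∃ i, q i ≠ p i := by
    by_contra h; push_neg at h; exact hpq (funext h)
  rw [lagr, map_prod]
  apply Finset.prod_eq_zero (Finset.mem_univ i)
  rw [map_prod]
  apply Finset.prod_eq_zero (Finset.mem_erase.mpr ⟨hi, Finset.mem_univ _⟩)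
  simp [pt]

lemma ψ_lagr_single (p : Fin n → Fin n) :
    ψ n ((eval (pt n p) (lagr n p))⁻¹ • lagr n p) = Pi.single p 1 := by
  funext q
  rw [ψ_apply]
  rw [smul_eq_C_mul, map_mul, eval_C]
  by_cases h : q = p
  · subst h
    rw [inv_mul_cancel₀ (eval_lagr_self n q), Pi.single_eq_same]
  · rw [eval_lagr_ne n p q h, mul_zero, Pi.single_eq_of_ne h]

lemma ψ_surjective : Function.Surjective (ψ n) := by
  have hrange : LinearMap.range (ψ n).toLinearMap = ⊤ := by
    rw [eq_top_iff, ← (Pi.basisFun ℚ (Fin n → Fin n)).span_eq, Submodule.span_le]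
    rintro x ⟨p, rfl⟩
    rw [Pi.basisFun_apply]
    exact ⟨(eval (pt n p) (lagr n p))⁻¹ • lagr n p, ψ_lagr_single n p⟩
  intro x
  have : x ∈ LinearMap.range (ψ n).toLinearMap := by rw [hrange]; trivial
  exact this


lemma ker_ψ_le : RingHom.ker (ψ n) ≤ gridIdeal n := by
  intro f hf
  set ψbar := Ideal.Quotient.liftₐ (gridIdeal n) (ψ n)
    (fun a ha => RingHom.mem_ker.mp (gridIdeal_le_ker n ha)) with hψbar
  have hmk : ∀ g, ψbar (Ideal.Quotient.mk (gridIdeal n) g) = ψ n g := by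
    intro g
    rw [hψbar, Ideal.Quotient.liftₐ_apply]
    rfl
  have hsurj : Function.Surjective ψbar := by
    intro x
    obtain ⟨g, hg⟩ := ψ_surjective n x
    exact ⟨Ideal.Quotient.mk _ g, by rw [hmk, hg]⟩
  have hrange : LinearMap.range ψbar.toLinearMap = ⊤ :=
    LinearMap.range_eq_top.mpr hsurj
  have hrn := LinearMap.finrank_range_add_finrank_ker ψbar.toLinearMap
  rw [hrange] at hrn
  have htop : Module.finrank ℚ (⊤ : Submodule ℚ ((Fin n → Fin n) → ℚ)) = n ^ n := by
    rw [finrank_top, Module.finrank_pi]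
    simp [Fintype.card_fun]
  rw [htop] at hrn
  have hle := finrank_quot_le n
  have hker0 : Module.finrank ℚ (LinearMap.ker ψbar.toLinearMap) = 0 := by omega
  have hkerbot : LinearMap.ker ψbar.toLinearMap = ⊥ := Submodule.finrank_eq_zero.mp hker0
  have : Ideal.Quotient.mk (gridIdeal n) f ∈ LinearMap.ker ψbar.toLinearMap := by
    rw [LinearMap.mem_ker]
    show ψbar (Ideal.Quotient.mk (gridIdeal n) f) = 0
    rw [hmk]
    exact hf
  rw [hkerbot, Submodule.mem_bot] at this
  rwa [Ideal.Quotient.eq_zero_iff_mem] at this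

noncomputable def Φ : MvPolynomial (Fin n) ℚ →ₐ[ℚ] (Equiv.Perm (Fin n) → ℚ) :=
  Pi.algHom _ _ (fun σ => MvPolynomial.aeval (pt n ⇑σ))

lemma Φ_apply (f : MvPolynomial (Fin n) ℚ) (σ : Equiv.Perm (Fin n)) :
    Φ n f σ = eval (pt n ⇑σ) f := rfl

lemma cval_eq (m : ℕ) : cval n m = (Finset.univ.val.map (pt n id)).esymm m := by
  rw [cval, eval_esymm]
  rfl

lemma perm_esymm (σ : Equiv.Perm (Fin n)) (m : ℕ) :
    eval (pt n ⇑σ) (esymm (Fin n) ℚ m) = cval n m := by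
  rw [eval_esymm, cval_eq]
  congr 1
  have h1 : pt n ⇑σ = (pt n id) ∘ ⇑σ := rfl
  rw [h1, ← Multiset.map_map]
  congr 1
  have h2 : Finset.univ.val.map ⇑σ = (Finset.univ.map σ.toEmbedding).val := by
    rw [Finset.map_val]
    rfl
  rw [h2, Finset.map_univ_equiv]

lemma permIdeal_le_kerΦ : permIdeal n ≤ RingHom.ker (Φ n) := by
  rw [permIdeal, Ideal.span_le]
  rintro x ⟨k, rfl⟩
  rw [SetLike.mem_coe, RingHom.mem_ker]
  funext σ
  show eval (pt n ⇑σ) (esymm (Fin n) ℚ ((k : ℕ) + 1) - C (cval n ((k : ℕ) + 1))) = 0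
  rw [map_sub, eval_C, perm_esymm, sub_self]

lemma exists_gen_ne (p : Fin n → Fin n) (hp : ¬ Function.Bijective p) :
    ∃ k : Fin n, eval (pt n p)
      (esymm (Fin n) ℚ ((k : ℕ) + 1) - C (cval n ((k : ℕ) + 1))) ≠ 0 := by
  by_contra h
  push_neg at h
  have hesymm : ∀ m ∈ Finset.range (n + 1),
      (Finset.univ.val.map (pt n p)).esymm m = (Finset.univ.val.map (pt n id)).esymm m := by
    intro m hm
    rcases m with _ | m'
    · simp [Multiset.esymm]
    · have hk : m' < n := by have := Finset.mem_range.mp hm; omega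
      have h2 := h ⟨m', hk⟩
      rw [map_sub, eval_C, sub_eq_zero] at h2
      rw [← eval_esymm, ← cval_eq]
      exact h2
  have hprod : ((Finset.univ.val.map (pt n p)).map (fun t => Polynomial.X - Polynomial.C t)).prod
      = ((Finset.univ.val.map (pt n id)).map (fun t => Polynomial.X - Polynomial.C t)).prod := by
    rw [Multiset.prod_X_sub_X_eq_sum_esymm, Multiset.prod_X_sub_X_eq_sum_esymm]
    simp only [Multiset.card_map]
    rw [show Multiset.card (Finset.univ.val : Multiset (Fin n)) = n from by simp]
    exact Finset.sum_congr rfl fun m hm => by rw [hesymm m hm]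
  have hroots : Finset.univ.val.map (pt n p) = Finset.univ.val.map (pt n id) := by
    have h1 := Polynomial.roots_multiset_prod_X_sub_C (Finset.univ.val.map (pt n p))
    have h2 := Polynomial.roots_multiset_prod_X_sub_C (Finset.univ.val.map (pt n id))
    rw [← h1, ← h2, hprod]
  apply hp
  rw [Fintype.bijective_iff_surjective_and_card]
  refine ⟨?_, rfl⟩
  intro k
  have hmem : pt n id k ∈ Finset.univ.val.map (pt n p) := by
    rw [hroots]
    exact Multiset.mem_map.mpr ⟨k, Finset.mem_val.mpr (Finset.mem_univ k), rfl⟩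
  obtain ⟨j, _, hj⟩ := Multiset.mem_map.mp hmem
  refine ⟨j, ?_⟩
  have : ((p j : ℕ) : ℚ) = ((k : ℕ) : ℚ) := by
    have := hj
    simp only [pt, id] at this
    linarith
  exact Fin.ext (Nat.cast_injective this)

lemma gridIdeal_le_permIdeal : gridIdeal n ≤ permIdeal n := by
  rw [gridIdeal, Ideal.span_le]
  rintro x ⟨j, rfl⟩
  exact gridPoly_mem n j

lemma kerΦ_le : RingHom.ker (Φ n) ≤ permIdeal n := by
  classical
  intro f hf
  rw [RingHom.mem_ker] at hf
  have hf' : ∀ σ : Equiv.Perm (Fin n), eval (pt n ⇑σ) f = 0 := by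
    intro σ
    have := congrFun hf σ
    rwa [Φ_apply] at this
  have hw : ∀ p : {p : Fin n → Fin n // ¬ Function.Bijective p},
      ∃ u, u ∈ permIdeal n ∧ ψ n u = Pi.single p.1 1 := by
    rintro ⟨p, hnb⟩
    obtain ⟨k, hk⟩ := exists_gen_ne n p hnb
    set w := esymm (Fin n) ℚ ((k : ℕ) + 1) - C (cval n ((k : ℕ) + 1)) with hwdef
    have hwmem : w ∈ permIdeal n := Ideal.subset_span ⟨k, rfl⟩
    set c := eval (pt n p) (lagr n p) * eval (pt n p) w with hc
    refine ⟨C c⁻¹ * (lagr n p * w), Ideal.mul_mem_left _ _ (Ideal.mul_mem_left _ _ hwmem), ?_⟩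
    funext q
    rw [ψ_apply, map_mul, eval_C, map_mul]
    by_cases hq : q = p
    · subst hq
      rw [Pi.single_eq_same, hc]
      exact inv_mul_cancel₀ (mul_ne_zero (eval_lagr_self n q) hk)
    · rw [eval_lagr_ne n p q hq, zero_mul, mul_zero, Pi.single_eq_of_ne hq]
  choose u humem husingle using hw
  have hgker : (f - ∑ p : {p : Fin n → Fin n // ¬ Function.Bijective p},
      C (eval (pt n p.1) f) * u p) ∈ RingHom.ker (ψ n) := by
    rw [RingHom.mem_ker]
    funext q
    show eval (pt n q) (f - ∑ p : {p : Fin n → Fin n // ¬ Function.Bijective p},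
      C (eval (pt n p.1) f) * u p) = 0
    rw [map_sub, map_sum]
    have hterm : ∀ p : {p : Fin n → Fin n // ¬ Function.Bijective p},
        eval (pt n q) (C (eval (pt n p.1) f) * u p)
          = eval (pt n p.1) f * (Pi.single p.1 (1 : ℚ) : (Fin n → Fin n) → ℚ) q := by
      intro p
      rw [map_mul, eval_C]
      congr 1
      have h3 := congrFun (husingle p) q
      rw [ψ_apply] at h3
      exact h3
    rw [Finset.sum_congr rfl fun p _ => hterm p]
    by_cases hqb : Function.Bijective q
    · have hz : ∀ p : {p : Fin n → Fin n // ¬ Function.Bijective p},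
          eval (pt n p.1) f * (Pi.single p.1 (1 : ℚ) : (Fin n → Fin n) → ℚ) q = 0 := by
        intro p
        have hpq : q ≠ p.1 := fun hh => p.2 (hh ▸ hqb)
        rw [Pi.single_eq_of_ne hpq, mul_zero]
      rw [Finset.sum_congr rfl fun p _ => hz p, Finset.sum_const_zero, sub_zero]
      exact hf' (Equiv.ofBijective q hqb)
    · rw [Finset.sum_eq_single (⟨q, hqb⟩ : {p : Fin n → Fin n // ¬ Function.Bijective p})]
      · rw [Pi.single_eq_same, mul_one, sub_self]
      · intro p _ hne
        have hpq : q ≠ p.1 := fun hh => hne (Subtype.ext hh.symm)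
        rw [Pi.single_eq_of_ne hpq, mul_zero]
      · intro hmem
        exact absurd (Finset.mem_univ _) hmem
  have hgmem := gridIdeal_le_permIdeal n (ker_ψ_le n hgker)
  have hsummem : (∑ p : {p : Fin n → Fin n // ¬ Function.Bijective p},
      C (eval (pt n p.1) f) * u p) ∈ permIdeal n :=
    Submodule.sum_mem _ fun p _ => Ideal.mul_mem_left _ _ (humem p)
  have hfeq : f = (f - ∑ p : {p : Fin n → Fin n // ¬ Function.Bijective p},
      C (eval (pt n p.1) f) * u p) + ∑ p : {p : Fin n → Fin n // ¬ Function.Bijective p},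
      C (eval (pt n p.1) f) * u p := by ring
  rw [hfeq]
  exact Submodule.add_mem _ hgmem hsummem

lemma Φ_surjective : Function.Surjective (Φ n) := by
  have hsingle : ∀ σ : Equiv.Perm (Fin n),
      Φ n ((eval (pt n ⇑σ) (lagr n ⇑σ))⁻¹ • lagr n ⇑σ) = Pi.single σ 1 := by
    intro σ
    funext τ
    rw [Φ_apply, smul_eq_C_mul, map_mul, eval_C]
    by_cases h : τ = σ
    · subst h
      rw [inv_mul_cancel₀ (eval_lagr_self n ⇑τ), Pi.single_eq_same]
    · rw [eval_lagr_ne n ⇑σ ⇑τ (fun hh => h (Equiv.coe_fn_injective hh)), mul_zero,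
        Pi.single_eq_of_ne h]
  have hrange : LinearMap.range (Φ n).toLinearMap = ⊤ := by
    rw [eq_top_iff, ← (Pi.basisFun ℚ (Equiv.Perm (Fin n))).span_eq, Submodule.span_le]
    rintro x ⟨σ, rfl⟩
    rw [Pi.basisFun_apply]
    exact ⟨(eval (pt n ⇑σ) (lagr n ⇑σ))⁻¹ • lagr n ⇑σ, hsingle σ⟩
  intro x
  have : x ∈ LinearMap.range (Φ n).toLinearMap := by rw [hrange]; trivial
  exact this

noncomputable def quotHom : (MvPolynomial (Fin n) ℚ ⧸ permIdeal n) →ₐ[ℚ]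
    (Equiv.Perm (Fin n) → ℚ) :=
  Ideal.Quotient.liftₐ (permIdeal n) (Φ n) (fun a ha => RingHom.mem_ker.mp (permIdeal_le_kerΦ n ha))

lemma quotHom_mk (f : MvPolynomial (Fin n) ℚ) :
    quotHom n (Ideal.Quotient.mk (permIdeal n) f) = Φ n f := by
  rw [quotHom, Ideal.Quotient.liftₐ_apply]
  rfl

noncomputable def quotEquiv : (MvPolynomial (Fin n) ℚ ⧸ permIdeal n) ≃ₐ[ℚ]
    (Equiv.Perm (Fin n) → ℚ) := by
  refine AlgEquiv.ofBijective (quotHom n) ⟨?_, ?_⟩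
  · rw [injective_iff_map_eq_zero]
    intro a ha
    obtain ⟨f, rfl⟩ := Ideal.Quotient.mk_surjective a
    rw [quotHom_mk] at ha
    rw [Ideal.Quotient.eq_zero_iff_mem]
    exact kerΦ_le n (RingHom.mem_ker.mpr ha)
  · intro x
    obtain ⟨f, hf⟩ := Φ_surjective n x
    exact ⟨Ideal.Quotient.mk _ f, by rw [quotHom_mk]; exact hf⟩

lemma quotEquiv_mk (f : MvPolynomial (Fin n) ℚ) :
    quotEquiv n (Ideal.Quotient.mk (permIdeal n) f) = Φ n f := by
  rw [show quotEquiv n (Ideal.Quotient.mk (permIdeal n) f)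
    = quotHom n (Ideal.Quotient.mk (permIdeal n) f) from rfl, quotHom_mk]

lemma rank_conj {Aa Bb : Type} [CommRing Aa] [CommRing Bb] [Algebra ℚ Aa] [Algebra ℚ Bb]
    (e : Aa ≃ₐ[ℚ] Bb) (M : Aa →ₗ[ℚ] Aa) :
    LinearMap.rank ((e.toLinearMap ∘ₗ M) ∘ₗ e.symm.toLinearMap) = LinearMap.rank M := by
  apply le_antisymm
  · exact le_trans (LinearMap.rank_comp_le_left _ _) (LinearMap.rank_comp_le_right _ _)
  · have hM : M = (e.symm.toLinearMap ∘ₗ ((e.toLinearMap ∘ₗ M) ∘ₗ e.symm.toLinearMap))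
        ∘ₗ e.toLinearMap := by
      ext x
      simp
    conv_lhs => rw [hM]
    exact le_trans (LinearMap.rank_comp_le_left _ _) (LinearMap.rank_comp_le_right _ _)

lemma rank_mulLeft_algEquiv {Aa Bb : Type} [CommRing Aa] [CommRing Bb] [Algebra ℚ Aa] [Algebra ℚ Bb]
    (e : Aa ≃ₐ[ℚ] Bb) (a : Aa) :
    LinearMap.rank (LinearMap.mulLeft ℚ a) = LinearMap.rank (LinearMap.mulLeft ℚ (e a)) := by
  have key : LinearMap.mulLeft ℚ (e a)
      = (e.toLinearMap ∘ₗ LinearMap.mulLeft ℚ a) ∘ₗ e.symm.toLinearMap := by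
    ext x
    simp [LinearMap.mulLeft_apply]
  rw [key, rank_conj]

lemma rank_mulLeft_pi {ι : Type} [Fintype ι] [DecidableEq ι] (w : ι → ℚ) :
    LinearMap.rank (LinearMap.mulLeft ℚ w) = Fintype.card {i // w i ≠ 0} := by
  have hdiag : LinearMap.mulLeft ℚ w = Matrix.toLin' (Matrix.diagonal w) := by
    apply LinearMap.ext
    intro x
    funext i
    rw [LinearMap.mulLeft_apply, Matrix.toLin'_apply, Matrix.mulVec_diagonal]
    rfl
  rw [hdiag, LinearMap.rank_diagonal]

end PermProof


/-- For any `F ∈ R`, the `ℚ`-rank of multiplication by `F` on `R/I` equals the number of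
permutations `σ` of `{1,…,n}` with `F(σ(1),…,σ(n)) ≠ 0`. -/
theorem rank_mul_eq_card_nonvanishing (n : ℕ) (F : MvPolynomial (Fin n) ℚ) :
    LinearMap.rank (mulMap n (permIdeal n) F) =
      ((Finset.univ.filter (fun σ : Equiv.Perm (Fin n) =>
        eval (fun i : Fin n => ((σ i : ℕ) : ℚ) + 1) F ≠ 0)).card : Cardinal) := by
  classical
  have h1 : mulMap n (permIdeal n) F
      = LinearMap.mulLeft ℚ (Ideal.Quotient.mk (permIdeal n) F) := rfl
  rw [h1, PermProof.rank_mulLeft_algEquiv (PermProof.quotEquiv n) _, PermProof.quotEquiv_mk,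
    PermProof.rank_mulLeft_pi, Fintype.card_subtype]
  congr 1
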